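/- Let k ≥ 2, let 1 ≤ m ≤ k−1, and let n be an integer with 2^k − 2^{k−m} < n ≤ 2^k − 2^{k−m−1}. Then: (i) w_1 = w_2 = … = w_m = 2^{k−1}; (ii) w_{m+1} = n − 2^{k−1} + 2^{k−m−1}; (iii) for each i with m+2 ≤ i ≤ k, if α_i = 0 then w_i = 2^{k−i}·⌊(n−1)/2^{k−i+1}⌋, and if α_i = 1 then w_i = n − 2^{k−i}·⌊(n−1)/2^{k−i+1}⌋ − 2^{k−i}. -/

import Mathlib

open Finset

/-- The value of column `j` (0-indexed) of the matrix
`H_k = [H_k^(k-1) | H_k^(k-2) | … | H_k^(0)]`, read as a `k`-bit integer with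
row 1 as the most significant bit.  (Column `c` of the block `H_k^(m)` is the
vector `(0,…,0,1,binary_m(c))`, i.e. the integer `2^m + c`; the block `H_k^(m)`
occupies global columns `[2^k - 2^(m+1), 2^k - 2^m)`, so that
`m = ⌊log₂ (2^k - 1 - j)⌋` and the value is `3·2^m + j - 2^k`.) -/
def colVal (k j : ℕ) : ℕ := 3 * 2 ^ Nat.log2 (2 ^ k - 1 - j) + j - 2 ^ k

/-- Row `i` (1-indexed, `1 ≤ i ≤ k`) of the matrix `H_k(n)` consisting of the
first `n` columns of `H_k`. -/
def Hrow (k n : ℕ) (i : ℕ) : Fin n → ZMod 2 :=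
  fun j => if Nat.testBit (colVal k j) (k - i) then 1 else 0

/-- The code `S_{n,k}`: the binary linear code spanned by the rows of `H_k(n)`. -/
def SCode (k n : ℕ) : Submodule (ZMod 2) (Fin n → ZMod 2) :=
  Submodule.span (ZMod 2) (Set.range fun i : Fin k => Hrow k n ((i : ℕ) + 1))

/-- `w_i`: the Hamming weight of the `i`-th (1-indexed) row of `H_k(n)`. -/
def rowWt (k n i : ℕ) : ℕ := hammingNorm (Hrow k n i)

/-- `α_i`: the `i`-th entry (1-indexed) of the last (`n`-th) column of `H_k(n)`;
`true` encodes `1` and `false` encodes `0`. -/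
def alphaBit (k n i : ℕ) : Bool := Nat.testBit (colVal k (n - 1)) (k - i)

/-- Row `i` (1-indexed) of the matrix `M_{n,k}`, whose `j`-th column
(0-indexed) is the `k`-bit binary representation of `2^k - 1 - j`, MSB first. -/
def Mrow (k n : ℕ) (i : ℕ) : Fin n → ZMod 2 :=
  fun j => if Nat.testBit (2 ^ k - 1 - (j : ℕ)) (k - i) then 1 else 0

/-- The code `D_{n,k}`: the binary linear code spanned by the rows of `M_{n,k}`. -/
def DCode (k n : ℕ) : Submodule (ZMod 2) (Fin n → ZMod 2) :=
  Submodule.span (ZMod 2) (Set.range fun i : Fin k => Mrow k n ((i : ℕ) + 1))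

/-- The value of column `j` (0-indexed) of the generalized matrix consisting of
`t-1` copies of `H_k^(k-1)` followed by `H_k(n')`, where `n = 2^(k-1)·(t-1) + n'`
with `2^(k-1) ≤ n' ≤ 2^k - 1` (so `t - 1 = (n - 2^(k-1)) / 2^(k-1)`). -/
def gcolVal (k n j : ℕ) : ℕ :=
  if j < (n - 2 ^ (k - 1)) / 2 ^ (k - 1) * 2 ^ (k - 1) then
    2 ^ (k - 1) + j % 2 ^ (k - 1)
  else colVal k (j - (n - 2 ^ (k - 1)) / 2 ^ (k - 1) * 2 ^ (k - 1))

/-- The generalized code `S_{n,k}`, defined for every `n ≥ 2^(k-1)`: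
the span of the rows of the `k × n` matrix obtained by concatenating `t-1`
copies of `H_k^(k-1)` followed by `H_k(n')`. -/
def GSCode (k n : ℕ) : Submodule (ZMod 2) (Fin n → ZMod 2) :=
  Submodule.span (ZMod 2)
    (Set.range fun i : Fin k => fun j : Fin n =>
      if Nat.testBit (gcolVal k n (j : ℕ)) (k - ((i : ℕ) + 1)) then (1 : ZMod 2) else 0)

/-- The minimum distance of a binary linear code: the least Hamming weight of a
nonzero codeword. -/
noncomputable def minDist {n : ℕ} (C : Submodule (ZMod 2) (Fin n → ZMod 2)) : ℕ :=
  sInf {w | ∃ c ∈ C, c ≠ 0 ∧ hammingNorm c = w}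

/-- `A_w`: the number of codewords of `C` of Hamming weight `w`. -/
noncomputable def numWt {n : ℕ} (C : Submodule (ZMod 2) (Fin n → ZMod 2)) (w : ℕ) : ℕ :=
  Set.ncard {c : Fin n → ZMod 2 | c ∈ C ∧ hammingNorm c = w}

/-- The undetected error probability
`P_ue(C,p) = Σ_{w=1}^n A_w p^w (1-p)^(n-w)`. -/
noncomputable def Pue {n : ℕ} (C : Submodule (ZMod 2) (Fin n → ZMod 2)) (p : ℝ) : ℝ :=
  ∑ w ∈ Finset.Icc 1 n, (numWt C w : ℝ) * p ^ w * (1 - p) ^ (n - w)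

/-- A code is proper if `p ↦ P_ue(C,p)` is monotonically increasing on `[0, 1/2]`. -/
def IsProper {n : ℕ} (C : Submodule (ZMod 2) (Fin n → ZMod 2)) : Prop :=
  MonotoneOn (Pue C) (Set.Icc (0 : ℝ) (1 / 2))

/-- An `[n,k]` code is satisfactory if `P_ue(C,p) ≤ 2^(k-n)` for all `p ∈ [0,1/2]`. -/
def IsSatisfactory (k : ℕ) {n : ℕ} (C : Submodule (ZMod 2) (Fin n → ZMod 2)) : Prop :=
  ∀ p ∈ Set.Icc (0 : ℝ) (1 / 2), Pue C p ≤ (2 : ℝ) ^ ((k : ℤ) - (n : ℤ))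

/-- The binary entropy function `h(x) = -x log₂ x - (1-x) log₂ (1-x)`. -/
noncomputable def binEnt (x : ℝ) : ℝ :=
  -(x * Real.logb 2 x) - (1 - x) * Real.logb 2 (1 - x)

/-- `U_m = (2^(m+2) - 3)·(1 - h((2^(m+1) - 2)/(2^(m+2) - 3)))`. -/
noncomputable def Ufun (m : ℕ) : ℝ :=
  ((2 : ℝ) ^ (m + 2) - 3) * (1 - binEnt (((2 : ℝ) ^ (m + 1) - 2) / ((2 : ℝ) ^ (m + 2) - 3)))

lemma tb_iff (x b : ℕ) : Nat.testBit x b = true ↔ 2 ^ b ≤ x % 2 ^ (b + 1) := by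
  rw [Nat.testBit_eq_decide_div_mod_eq, decide_eq_true_eq]
  have h1 : x % 2 ^ (b+1) / 2 ^ b = x / 2 ^ b % 2 := by
    rw [pow_succ]; exact Nat.mod_mul_right_div_self x (2^b) 2
  have hd := Nat.div_add_mod (x % 2 ^ (b+1)) (2 ^ b)
  have hm : x % 2 ^ (b+1) % 2 ^ b < 2 ^ b := Nat.mod_lt _ (Nat.two_pow_pos b)
  have h0 : x % 2 ^ (b+1) / 2 ^ b = 0 ∨ x % 2 ^ (b+1) / 2 ^ b = 1 := by
    rw [h1]; omega
  rcases h0 with h0 | h0 <;> rw [h0] at hd <;> rw [h1] at h0 <;> simp [h0] <;> omega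

lemma tb_eq (x b : ℕ) : Nat.testBit x b = decide (2 ^ b ≤ x % 2 ^ (b + 1)) := by
  cases h : Nat.testBit x b with
  | true => exact (decide_eq_true ((tb_iff x b).mp h)).symm
  | false =>
    symm; rw [decide_eq_false_iff_not]
    intro hle
    rw [(tb_iff x b).mpr hle] at h; cases h

lemma testBit_pow_add (a c b : ℕ) (hb : b < a) :
    Nat.testBit (2 ^ a + c) b = Nat.testBit c b := by
  have h2 : (2:ℕ) ^ a = 2 ^ (b+1) * 2 ^ (a-b-1) := by
    rw [← pow_add]; congr 1; omega
  rw [tb_eq, tb_eq, h2, Nat.mul_add_mod]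

lemma succ_divmod (D s : ℕ) (hD : 2 ≤ D) :
    (s % D + 1 < D ∧ (s+1)/D = s/D ∧ (s+1)%D = s%D + 1) ∨
    (s % D + 1 = D ∧ (s+1)/D = s/D + 1 ∧ (s+1)%D = 0) := by
  have hm : s % D < D := Nat.mod_lt _ (by omega)
  have hmod : (s+1) % D = (s % D + 1) % D := by
    conv_lhs => rw [Nat.add_mod]
    rw [Nat.mod_eq_of_lt (show 1 < D by omega)]
  have hdiv := Nat.succ_div (a := s) (b := D)
  by_cases h : s % D + 1 = D
  · right
    have h0 : (s+1) % D = 0 := by rw [hmod, h, Nat.mod_self]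
    have hdvd : D ∣ s + 1 := Nat.dvd_iff_mod_eq_zero.mpr h0
    rw [if_pos hdvd] at hdiv
    exact ⟨h, hdiv, h0⟩
  · left
    have hlt : s % D + 1 < D := by omega
    have h0 : (s+1) % D = s % D + 1 := by rw [hmod, Nat.mod_eq_of_lt hlt]
    have hdvd : ¬ D ∣ s + 1 := by
      rw [Nat.dvd_iff_mod_eq_zero]; omega
    rw [if_neg hdvd] at hdiv
    simpa using ⟨hlt, hdiv, h0⟩

lemma cnt (b s : ℕ) :
    ((Finset.range s).filter (fun c => Nat.testBit c b = true)).card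
      = 2 ^ b * (s / 2 ^ (b+1)) + (s % 2 ^ (b+1) - 2 ^ b) := by
  induction s with
  | zero => simp
  | succ s ih =>
    have hP : 0 < 2 ^ b := Nat.two_pow_pos b
    have h2 : (2:ℕ) ^ (b+1) = 2 * 2 ^ b := by ring
    rw [Finset.range_add_one, Finset.filter_insert]
    rcases succ_divmod (2 ^ (b+1)) s (by omega) with ⟨h1, hq, hr⟩ | ⟨h1, hq, hr⟩ <;>
      rw [hq, hr] <;>
      by_cases h : Nat.testBit s b = true
    · rw [if_pos h, Finset.card_insert_of_notMem (by simp), ih]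
      have hle := (tb_iff s b).mp h
      omega
    · rw [if_neg h, ih]
      have hlt : ¬ (2 ^ b ≤ s % 2 ^ (b+1)) := fun hc => h ((tb_iff s b).mpr hc)
      omega
    · rw [if_pos h, Finset.card_insert_of_notMem (by simp), ih, mul_add, mul_one]
      have hle := (tb_iff s b).mp h
      omega
    · rw [if_neg h, ih, mul_add, mul_one]
      have hlt : ¬ (2 ^ b ≤ s % 2 ^ (b+1)) := fun hc => h ((tb_iff s b).mpr hc)
      omega

lemma split_cnt (p : ℕ → Prop) [DecidablePred p] (x s : ℕ) :
    ((Finset.range (x + s)).filter p).card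
      = ((Finset.range x).filter p).card
        + ((Finset.range s).filter (fun c => p (x + c))).card := by
  have hd : Disjoint (Finset.range x) ((Finset.range s).map (addLeftEmbedding x)) := by
    rw [Finset.disjoint_left]
    intro j hj hj'
    rw [Finset.mem_map] at hj'
    obtain ⟨c, _, hc⟩ := hj'
    simp only [addLeftEmbedding_apply] at hc
    rw [Finset.mem_range] at hj
    omega
  rw [Finset.range_add, Finset.filter_union,
    Finset.card_union_of_disjoint (Finset.disjoint_filter_filter hd),
    Finset.filter_map, Finset.card_map]
  rfl

lemma colVal_block (k a c : ℕ) (hak : a + 1 ≤ k) (hc : c < 2 ^ a) :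
    colVal k (2 ^ k - 2 ^ (a+1) + c) = 2 ^ a + c := by
  have hpow : (2:ℕ) ^ (a+1) ≤ 2 ^ k := Nat.pow_le_pow_right (by norm_num) hak
  have h2 : (2:ℕ) ^ (a+1) = 2 * 2 ^ a := by ring
  have hx : 2 ^ k - 1 - (2 ^ k - 2 ^ (a+1) + c) = 2 ^ (a+1) - 1 - c := by omega
  unfold colVal
  rw [hx]
  have hlog : Nat.log2 (2 ^ (a+1) - 1 - c) = a := by
    rw [Nat.log2_eq_log_two]
    apply Nat.log_eq_of_pow_le_of_lt_pow <;> omega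
  rw [hlog]
  omega

lemma block_cnt (k a s b : ℕ) (hak : a + 1 ≤ k) (hs : s ≤ 2 ^ a) :
    ((Finset.range s).filter
      (fun c => Nat.testBit (colVal k (2 ^ k - 2 ^ (a+1) + c)) b = true)).card
      = if a < b then 0
        else if b = a then s
        else 2 ^ b * (s / 2 ^ (b+1)) + (s % 2 ^ (b+1) - 2 ^ b) := by
  have hcong : ∀ c ∈ Finset.range s,
      (Nat.testBit (colVal k (2 ^ k - 2 ^ (a+1) + c)) b = true)
        ↔ (Nat.testBit (2 ^ a + c) b = true) := by
    intro c hc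
    rw [colVal_block k a c hak (lt_of_lt_of_le (Finset.mem_range.mp hc) hs)]
  rw [Finset.filter_congr hcong]
  rcases lt_trichotomy a b with h | h | h
  · rw [if_pos h]
    rw [Finset.card_eq_zero, Finset.filter_eq_empty_iff]
    intro c hc
    have h2 : (2:ℕ) ^ (a+1) = 2 * 2 ^ a := by ring
    have hpow : (2:ℕ) ^ (a+1) ≤ 2 ^ b := Nat.pow_le_pow_right (by norm_num) h
    have hlt : 2 ^ a + c < 2 ^ b := by
      have := Finset.mem_range.mp hc
      omega
    rw [Nat.testBit_lt_two_pow hlt]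
    simp
  · subst h
    rw [if_neg (lt_irrefl a), if_pos rfl]
    rw [Finset.filter_true_of_mem, Finset.card_range]
    intro c hc
    rw [tb_iff]
    have hc' : c < 2 ^ a := lt_of_lt_of_le (Finset.mem_range.mp hc) hs
    have h2 : (2:ℕ) ^ (a+1) = 2 * 2 ^ a := by ring
    rw [Nat.mod_eq_of_lt (by omega)]
    omega
  · rw [if_neg (by omega), if_neg (by omega)]
    have hcong2 : ∀ c ∈ Finset.range s,
        (Nat.testBit (2 ^ a + c) b = true) ↔ (Nat.testBit c b = true) := by
      intro c _
      rw [testBit_pow_add a c b h]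
    rw [Finset.filter_congr hcong2, cnt]

lemma full_cnt (k b : ℕ) (hb : b < k) :
    ∀ d, d ≤ k →
    ((Finset.range (2 ^ k - 2 ^ (k - d))).filter
        (fun j => Nat.testBit (colVal k j) b = true)).card
      = if k - d ≤ b then 2 ^ (k-1) else 2 ^ (k-1) - 2 ^ (k-d-1) := by
  intro d
  induction d with
  | zero =>
    intro _
    simp only [Nat.sub_zero, Nat.sub_self, Finset.range_zero, Finset.filter_empty,
      Finset.card_empty]
    rw [if_neg (by omega)]
  | succ d ih =>
    intro hd
    have hd' : d ≤ k := by omega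
    set a := k - (d+1) with ha
    have ha1 : a + 1 = k - d := by omega
    have hak : a + 1 ≤ k := by omega
    have h2 : (2:ℕ) ^ (a+1) = 2 * 2 ^ a := by ring
    have hpow : (2:ℕ) ^ (a+1) ≤ 2 ^ k := Nat.pow_le_pow_right (by norm_num) hak
    have hpowk : (2:ℕ) ^ a ≤ 2 ^ (k-1) := Nat.pow_le_pow_right (by norm_num) (by omega)
    have hsplit : 2 ^ k - 2 ^ a = (2 ^ k - 2 ^ (a+1)) + 2 ^ a := by omega
    rw [hsplit, split_cnt, block_cnt k a (2^a) b hak le_rfl,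
      show (2:ℕ) ^ k - 2 ^ (a+1) = 2 ^ k - 2 ^ (k-d) by rw [ha1], ih hd']
    rcases lt_trichotomy a b with h | h | h
    · rw [if_pos (by omega : k - d ≤ b), if_pos h, if_pos (by omega : a ≤ b)]
      omega
    · subst h
      rw [if_neg (by omega : ¬ (k - d ≤ a)), if_neg (lt_irrefl a), if_pos rfl,
        if_pos (le_refl a), show k - d - 1 = a by omega]
      omega
    · have hd1 : (2:ℕ) ^ a = 2 ^ (b+1) * 2 ^ (a-b-1) := by
        rw [← pow_add]; congr 1; omega
      have hdiv : (2:ℕ) ^ a / 2 ^ (b+1) = 2 ^ (a-b-1) := by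
        rw [hd1]; exact Nat.mul_div_cancel_left _ (Nat.two_pow_pos _)
      have hmod : (2:ℕ) ^ a % 2 ^ (b+1) = 0 := by
        rw [hd1]; exact Nat.mul_mod_right _ _
      have hbm : (2:ℕ) ^ b * 2 ^ (a-b-1) = 2 ^ (a-1) := by
        rw [← pow_add]; congr 1; omega
      have ha2 : (2:ℕ) ^ a = 2 * 2 ^ (a-1) := by
        rw [← pow_succ']; congr 1; omega
      rw [if_neg (by omega : ¬ (k - d ≤ b)), if_neg (by omega : ¬ (a < b)),
        if_neg (by omega : ¬ (b = a)), if_neg (by omega : ¬ (a ≤ b)),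
        show k - d - 1 = a by omega, hdiv, hmod, hbm]
      omega

lemma rowWt_eq (k n i : ℕ) :
    rowWt k n i
      = ((Finset.range n).filter (fun j => Nat.testBit (colVal k j) (k - i) = true)).card := by
  rw [rowWt, hammingNorm, Finset.card_filter, Finset.card_filter,
    ← Fin.sum_univ_eq_sum_range
      (fun j => if Nat.testBit (colVal k j) (k-i) = true then (1:ℕ) else 0) n]
  apply Finset.sum_congr rfl
  intro j _
  simp only [Hrow]
  by_cases h : Nat.testBit (colVal k (j:ℕ)) (k-i) <;> simp [h]


private lemma gen_sub1 (Y R L : ℕ) (h1 : 1 ≤ L) (h2 : Y + R = L - 1) : L = Y + (R + 1) := by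
  omega

private lemma gen_sub2 (Y T R L : ℕ) (h1 : 1 ≤ L) (h2 : Y + R = L - 1) (h3 : R + 1 = T) :
    L = Y + T := by omega

private lemma gen_ii (P A L N : ℕ) (h1 : 2*A ≤ P) (h2 : 1 ≤ L) (h3 : N = 2*P - 2*A + L) :
    P - A + L = N - P + A := by omega

private lemma gen_iii0 (P A X T R : ℕ) (h : R + 1 ≤ T) :
    P - A + (X + (R + 1 - T)) = P - A + X := by omega

private lemma gen_iii1 (P A X T R L N : ℕ) (h1 : A ≤ P) (h2 : 1 ≤ L) (h3 : T ≤ R)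
    (h4 : R + 1 = 2*T) (h5 : 2*X + R = L - 1) (h6 : N = 2*P - 2*A + L) :
    P - A + (X + T + (0 - T)) = N - (P - A + X) - T := by omega

private lemma gen_iii2 (P A X T R L N : ℕ) (h1 : A ≤ P) (h2 : 1 ≤ L) (h3 : T ≤ R)
    (h4 : R < 2*T) (h5 : 2*X + R = L - 1) (h6 : N = 2*P - 2*A + L) :
    P - A + (X + (R + 1 - T)) = N - (P - A + X) - T := by omega

theorem stmt1 (k m n : ℕ) (hk : 2 ≤ k) (hm1 : 1 ≤ m) (hm2 : m ≤ k - 1)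
    (hn1 : 2 ^ k - 2 ^ (k - m) < n) (hn2 : n ≤ 2 ^ k - 2 ^ (k - m - 1)) :
    (∀ i, 1 ≤ i → i ≤ m → rowWt k n i = 2 ^ (k - 1)) ∧
    rowWt k n (m + 1) = n - 2 ^ (k - 1) + 2 ^ (k - m - 1) ∧
    (∀ i, m + 2 ≤ i → i ≤ k →
      (alphaBit k n i = false →
        rowWt k n i = 2 ^ (k - i) * ((n - 1) / 2 ^ (k - i + 1))) ∧
      (alphaBit k n i = true →
        rowWt k n i = n - 2 ^ (k - i) * ((n - 1) / 2 ^ (k - i + 1)) - 2 ^ (k - i))) := by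
  have hmk : m + 1 ≤ k := by omega
  set a := k - m - 1 with ha
  have ha1 : a + 1 = k - m := by omega
  have h2a : (2:ℕ) ^ (a+1) = 2 * 2 ^ a := by ring
  have hpowa : (2:ℕ) ^ (a+1) ≤ 2 ^ k := Nat.pow_le_pow_right (by norm_num) (by omega)
  have hpowk : (2:ℕ) ^ a ≤ 2 ^ (k-1) := Nat.pow_le_pow_right (by norm_num) (by omega)
  have h2k : (2:ℕ) ^ k = 2 * 2 ^ (k-1) := by
    rw [← pow_succ']; congr 1; omega
  rw [← ha1] at hn1
  set L := n - (2 ^ k - 2 ^ (a+1)) with hLdef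
  have hL1 : 1 ≤ L := by omega
  have hL2 : L ≤ 2 ^ a := by omega
  have hnL : n = (2 ^ k - 2 ^ (a+1)) + L := by omega
  clear_value a L
  have hnPL : n = 2 * 2 ^ (k-1) - 2 * 2 ^ a + L := by rw [hnL, h2k, h2a]
  have key : ∀ i, 1 ≤ i → i ≤ k →
      rowWt k n i
        = (if a + 1 ≤ k - i then 2 ^ (k-1) else 2 ^ (k-1) - 2 ^ a)
          + (if a < k - i then 0
             else if k - i = a then L
             else 2 ^ (k-i) * (L / 2 ^ (k-i+1)) + (L % 2 ^ (k-i+1) - 2 ^ (k-i))) := by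
    intro i hi1 hik
    have F := full_cnt k (k-i) (by omega) m (by omega)
    rw [← ha1, Nat.add_sub_cancel] at F
    have B := block_cnt k a L (k-i) (by omega) hL2
    rw [rowWt_eq, hnL, split_cnt]
    simp only [F, B]
  refine ⟨?_, ?_, ?_⟩
  · intro i hi1 him
    rw [key i hi1 (by omega), if_pos (by omega : a + 1 ≤ k - i),
      if_pos (by omega : a < k - i)]
    exact Nat.add_zero _
  · rw [key (m+1) (by omega) (by omega), show k - (m+1) = a from by omega,
      if_neg (by omega : ¬ (a + 1 ≤ a)), if_neg (lt_irrefl a), if_pos rfl]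
    have hpow2 : (2:ℕ) ^ (a+1) ≤ 2 ^ (k-1) := Nat.pow_le_pow_right (by norm_num) (by omega)
    exact gen_ii _ _ _ _ (by rw [← h2a]; exact hpow2) hL1 hnPL
  · intro i hi2 hik
    have hba : k - i < a := by omega
    have h2b : (2:ℕ) ^ (k-i+1) = 2 * 2 ^ (k-i) := by ring
    set Q := (L-1) / 2 ^ (k-i+1) with hQ
    set R := (L-1) % 2 ^ (k-i+1) with hR
    have hQd : 2 ^ (k-i+1) * Q + R = L - 1 := Nat.div_add_mod _ _
    have hRlt : R < 2 ^ (k-i+1) := Nat.mod_lt _ (Nat.two_pow_pos _)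
    have hXY : (2:ℕ) ^ (k-i+1) * Q = 2 * (2 ^ (k-i) * Q) := by ring
    have hQd2 : 2 * (2 ^ (k-i) * Q) + R = L - 1 := by rw [← hXY]; exact hQd
    have hRlt2 : R < 2 * 2 ^ (k-i) := by rw [← h2b]; exact hRlt
    have hw := key i (by omega) hik
    rw [if_neg (by omega : ¬ (a + 1 ≤ k - i)), if_neg (by omega : ¬ (a < k - i)),
      if_neg (by omega : ¬ (k - i = a))] at hw
    have hcv : colVal k (n-1) = 2 ^ a + (L-1) := by
      rw [show n - 1 = 2 ^ k - 2 ^ (a+1) + (L-1) from by omega]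
      exact colVal_block k a (L-1) (by omega) (by omega)
    have halpha : alphaBit k n i = Nat.testBit (L-1) (k-i) := by
      rw [alphaBit, hcv, testBit_pow_add _ _ _ hba]
    have hdvd : (2:ℕ) ^ (k-i+1) ∣ (2 ^ k - 2 ^ (a+1)) :=
      Nat.dvd_sub (pow_dvd_pow 2 (by omega)) (pow_dvd_pow 2 (by omega))
    have hdivn : (n-1) / 2 ^ (k-i+1)
        = (2 ^ k - 2 ^ (a+1)) / 2 ^ (k-i+1) + Q := by
      rw [show n - 1 = 2 ^ k - 2 ^ (a+1) + (L-1) from by omega,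
        Nat.add_div_of_dvd_right hdvd]
    have he1 : (2:ℕ) ^ k - 2 ^ (a+1) = 2 ^ (k-i+1) * (2 ^ (i-1) - 2 ^ (a - (k-i))) := by
      rw [Nat.mul_sub, ← pow_add, ← pow_add]
      congr 2 <;> omega
    have hEdiv : 2 ^ (k-i) * ((2 ^ k - 2 ^ (a+1)) / 2 ^ (k-i+1)) = 2 ^ (k-1) - 2 ^ a := by
      rw [he1, Nat.mul_div_cancel_left _ (Nat.two_pow_pos _), Nat.mul_sub,
        ← pow_add, ← pow_add]
      congr 2 <;> omega
    have hEn : 2 ^ (k-i) * ((n-1) / 2 ^ (k-i+1)) = (2 ^ (k-1) - 2 ^ a) + 2 ^ (k-i) * Q := by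
      rw [hdivn, mul_add, hEdiv]
    refine ⟨?_, ?_⟩
    · intro h0
      rw [halpha] at h0
      have hRb : R < 2 ^ (k-i) := by
        by_contra hc
        push_neg at hc
        rw [(tb_iff (L-1) (k-i)).mpr hc] at h0
        cases h0
      have hLQ : L = 2 ^ (k-i+1) * Q + (R + 1) := gen_sub1 _ _ _ hL1 hQd
      have hld : L / 2 ^ (k-i+1) = Q := by
        rw [hLQ, Nat.mul_add_div (Nat.two_pow_pos _),
          Nat.div_eq_of_lt (by rw [h2b]; omega), add_zero]
      have hlm : L % 2 ^ (k-i+1) = R + 1 := by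
        rw [hLQ, Nat.mul_add_mod, Nat.mod_eq_of_lt (by rw [h2b]; omega)]
      rw [hw, hld, hlm, hEn]
      exact gen_iii0 _ _ _ _ _ hRb
    · intro h1
      rw [halpha] at h1
      have hRb : 2 ^ (k-i) ≤ R := (tb_iff (L-1) (k-i)).mp h1
      by_cases hR1 : R + 1 = 2 ^ (k-i+1)
      · have hLQ : L = 2 ^ (k-i+1) * (Q + 1) := by
          rw [mul_add, mul_one]
          exact gen_sub2 _ _ _ _ hL1 hQd hR1
        have hld : L / 2 ^ (k-i+1) = Q + 1 := by
          rw [hLQ]; exact Nat.mul_div_cancel_left _ (Nat.two_pow_pos _)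
        have hlm : L % 2 ^ (k-i+1) = 0 := by
          rw [hLQ]; exact Nat.mul_mod_right _ _
        rw [hw, hld, hlm, mul_add, mul_one, hEn]
        exact gen_iii1 _ _ _ _ _ _ _ hpowk hL1 hRb (by rw [← h2b]; exact hR1) hQd2 hnPL
      · have hLQ : L = 2 ^ (k-i+1) * Q + (R + 1) := gen_sub1 _ _ _ hL1 hQd
        have hld : L / 2 ^ (k-i+1) = Q := by
          rw [hLQ, Nat.mul_add_div (Nat.two_pow_pos _),
            Nat.div_eq_of_lt (by omega), add_zero]
        have hlm : L % 2 ^ (k-i+1) = R + 1 := by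
          rw [hLQ, Nat.mul_add_mod, Nat.mod_eq_of_lt (by omega)]
        rw [hw, hld, hlm, hEn]
        exact gen_iii2 _ _ _ _ _ _ _ hpowk hL1 hRb hRlt2 hQd2 hnPL
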